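/- Global counter reduction for modulo guards: for every word w, position i, coefficients c₁,...,c_n ∈ ℤ, subalphabets B₁,...,B_n, modulus q ≥ 2, residue r, and formula φ: w,i ⊨ (Σᵢ cᵢ#Bᵢ ≡ r mod q) U φ iff there exists r₀ ∈ [q] such that Σᵢ cᵢ#Bᵢ(w,1,i) ≡ r₀ (mod q) and there exists j > i with w,j ⊨ φ and Σᵢ cᵢ#Bᵢ(w,1,j) ≡ r₀ + r + δ (mod q), where δ accounts for the contributions of the endpoint letters (formally: Σᵢ cᵢ#Bᵢ(w,i+1,j−1) ≡ r (mod q)). -/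

import Mathlib

/-- Letter at 1-based position `i` of word `w`. -/
def letterAt {A : Type} (w : List A) (i : ℕ) : Option A := w[i - 1]?

/-- Position `k` of `w` carries a letter of the subalphabet `B`. -/
def inB {A : Type} (w : List A) (B : Finset A) (k : ℕ) : Prop :=
  ∃ a ∈ B, letterAt w k = some a

open scoped Classical in
/-- `#B(w,x,y)`: the number of occurrences of letters of `B` at positions
`x..y` (inclusive, 1-based) of `w`; `0` if `x > y`. -/
noncomputable def countB {A : Type} (w : List A) (B : Finset A) (x y : ℕ) : ℕ :=
  ((Finset.Icc x y).filter (fun k => inB w B k)).card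

/-- Weighted count `Σᵢ cᵢ·#Bᵢ(w,x,y)`. -/
noncomputable def wcount {A : Type} (w : List A) {n : ℕ}
    (c : Fin n → ℤ) (Bs : Fin n → Finset A) (x y : ℕ) : ℤ :=
  ∑ k, c k * (countB w (Bs k) x y : ℤ)

open scoped Classical in
lemma countB_add {A : Type} (w : List A) (B : Finset A) {i m : ℕ} (h : i ≤ m) :
    countB w B 1 m = countB w B 1 i + countB w B (i+1) m := by
  unfold countB
  rw [← Finset.card_union_of_disjoint, ← Finset.filter_union]
  · congr 1
    ext k
    simp only [Finset.mem_filter, Finset.mem_union, Finset.mem_Icc]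
    constructor
    · rintro ⟨hk, hB⟩; exact ⟨by omega, hB⟩
    · rintro ⟨hk, hB⟩; exact ⟨by omega, hB⟩
  · apply Finset.disjoint_filter_filter
    rw [Finset.disjoint_left]
    intro k hk hk'
    simp only [Finset.mem_Icc] at hk hk'
    omega

lemma wcount_add {A : Type} (w : List A) {n : ℕ}
    (c : Fin n → ℤ) (Bs : Fin n → Finset A) {i m : ℕ} (h : i ≤ m) :
    wcount w c Bs 1 m = wcount w c Bs 1 i + wcount w c Bs (i+1) m := by
  unfold wcount
  rw [← Finset.sum_add_distrib]
  apply Finset.sum_congr rfl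
  intro k _
  rw [countB_add w _ h]
  push_cast
  ring

theorem global_counter_reduction_modulo {A : Type} (w : List A) (i : ℕ)
    {n : ℕ} (c : Fin n → ℤ) (Bs : Fin n → Finset A)
    (q : ℕ) (hq : 2 ≤ q) (r : ℤ) (Φ : ℕ → Prop) :
    (∃ j, i < j ∧ j ≤ w.length ∧
        wcount w c Bs (i+1) (j-1) ≡ r [ZMOD (q : ℤ)] ∧ Φ j) ↔
    (∃ r₀ : ℤ, 0 ≤ r₀ ∧ r₀ < (q : ℤ) ∧
        wcount w c Bs 1 i ≡ r₀ [ZMOD (q : ℤ)] ∧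
        ∃ j, i < j ∧ j ≤ w.length ∧ Φ j ∧
          wcount w c Bs 1 (j-1) ≡ r₀ + r [ZMOD (q : ℤ)]) := by
  have hq0 : (0 : ℤ) < (q : ℤ) := by exact_mod_cast lt_of_lt_of_le two_pos hq
  constructor
  · rintro ⟨j, hij, hjw, hmod, hΦ⟩
    refine ⟨wcount w c Bs 1 i % q, Int.emod_nonneg _ hq0.ne', Int.emod_lt_of_pos _ hq0,
      (Int.ModEq.symm (Int.emod_emod_of_dvd _ dvd_rfl)), ?_⟩
    · exact ⟨j, hij, hjw, hΦ, by
        rw [wcount_add w c Bs (show i ≤ j - 1 by omega)]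
        exact Int.ModEq.add (Int.ModEq.symm (Int.emod_emod_of_dvd _ dvd_rfl)) hmod⟩
  · rintro ⟨r₀, _, _, h0, j, hij, hjw, hΦ, hmod⟩
    refine ⟨j, hij, hjw, ?_, hΦ⟩
    have := wcount_add w c Bs (show i ≤ j - 1 by omega)
    have h1 : wcount w c Bs (i+1) (j-1) = wcount w c Bs 1 (j-1) - wcount w c Bs 1 i := by
      omega
    rw [h1]
    calc wcount w c Bs 1 (j-1) - wcount w c Bs 1 i
        ≡ (r₀ + r) - r₀ [ZMOD (q:ℤ)] := Int.ModEq.sub hmod h0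
      _ = r := by ring
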